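/- Let F be a field, fix an admissible order ≺ on the monomials of F[x₁,…,xₙ], let D be a positive integer, let 𝒫 be a set of polynomials in F[x₁,…,xₙ] each of degree at most D, and let S be a 𝒫-support. Suppose that every monomial m of degree at most D satisfies: (Satisfiability condition) the set of polynomials S(m) has a common root in Fⁿ; and (Reducibility condition) for all monomials m′, if S(m′) ⊆ S(m) then m′ is reducible modulo the ideal generated by S(m′) if and only if m′ is reducible modulo the ideal generated by S(m). Then every polynomial calculus refutation of 𝒫 over F has degree strictly greater than D. -/

import Mathlib

/-- An admissible order on the monomials (exponent vectors) of a polynomial ring: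
a total well-order in which `1` (the zero exponent vector) is smallest and which
respects multiplication (addition of exponent vectors). -/
structure AdmissibleOrder (σ : Type*) where
  lt : (σ →₀ ℕ) → (σ →₀ ℕ) → Prop
  trans : ∀ {a b c}, lt a b → lt b c → lt a c
  irrefl : ∀ a, ¬ lt a a
  total : ∀ a b, a = b ∨ lt a b ∨ lt b a
  wf : WellFounded lt
  zero_lt : ∀ m, m ≠ 0 → lt 0 m
  add_lt : ∀ (m : σ →₀ ℕ) {m₁ m₂}, lt m₁ m₂ → lt (m + m₁) (m + m₂)

namespace AdmissibleOrder

variable {σ : Type*} (O : AdmissibleOrder σ)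

lemma asymm {a b : σ →₀ ℕ} (h : O.lt a b) : ¬ O.lt b a :=
  fun h' => O.irrefl a (O.trans h h')

lemma not_lt_zero (m : σ →₀ ℕ) : ¬ O.lt m 0 := by
  rcases eq_or_ne m 0 with rfl | h
  · exact O.irrefl 0
  · exact O.asymm (O.zero_lt m h)

lemma add_lt_right {m₁ m₂ : σ →₀ ℕ} (h : O.lt m₁ m₂) (c : σ →₀ ℕ) :
    O.lt (m₁ + c) (m₂ + c) := by
  rw [add_comm m₁ c, add_comm m₂ c]; exact O.add_lt c h

/-- `a ≼ a + b`. -/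
lemma le_add_right (a b : σ →₀ ℕ) : a = a + b ∨ O.lt a (a + b) := by
  rcases eq_or_ne b 0 with rfl | h
  · left; simp
  · right
    have := O.add_lt a (O.zero_lt b h)
    simpa using this

/-- a pointwise-≤ divisor is ≼. -/
lemma le_of_le (a m : σ →₀ ℕ) (h : a ≤ m) : a = m ∨ O.lt a m := by
  have : m = a + (m - a) := by
    ext y
    have := h y
    simp only [Finsupp.coe_add, Finsupp.coe_tsub, Pi.add_apply, Pi.sub_apply]
    omega
  rw [this]; exact O.le_add_right a (m - a)

/-- every nonempty finset of monomials has a maximum. -/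
lemma exists_max (s : Finset (σ →₀ ℕ)) (hs : s.Nonempty) :
    ∃ m ∈ s, ∀ m' ∈ s, m' = m ∨ O.lt m' m := by
  classical
  induction s using Finset.induction_on with
  | empty => exact absurd hs (by simp)
  | @insert a s ha ih =>
    rcases s.eq_empty_or_nonempty with rfl | hs'
    · exact ⟨a, by simp, by simp⟩
    · obtain ⟨m, hm, hmax⟩ := ih hs'
      rcases O.total a m with rfl | hlt | hlt
      · exact ⟨a, by simp [hm], by
          intro m' hm'
          rcases Finset.mem_insert.1 hm' with rfl | hm'
          · exact Or.inl rfl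
          · exact hmax m' hm'⟩
      · exact ⟨m, by simp [hm], by
          intro m' hm'
          rcases Finset.mem_insert.1 hm' with rfl | hm'
          · exact Or.inr hlt
          · exact hmax m' hm'⟩
      · refine ⟨a, by simp, ?_⟩
        intro m' hm'
        rcases Finset.mem_insert.1 hm' with rfl | hm'
        · exact Or.inl rfl
        · rcases hmax m' hm' with rfl | h
          · exact Or.inr hlt
          · exact Or.inr (O.trans h hlt)

end AdmissibleOrder

section FinsuppHelp

variable {σ : Type*} [DecidableEq σ]

lemma nsupport_add (a b : σ →₀ ℕ) : (a + b).support = a.support ∪ b.support := by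
  ext y
  simp only [Finsupp.mem_support_iff, Finset.mem_union, Finsupp.add_apply]
  omega

/-- squarefree monomial with support `E`. -/
noncomputable def mkF (E : Finset σ) : σ →₀ ℕ := ∑ y ∈ E, Finsupp.single y 1

omit [DecidableEq σ] in
@[simp] lemma mkF_empty : mkF (∅ : Finset σ) = 0 := by simp [mkF]

lemma mkF_insert {y : σ} {E : Finset σ} (h : y ∉ E) :
    mkF (insert y E) = Finsupp.single y 1 + mkF E := by
  simp [mkF, Finset.sum_insert h]

lemma mkF_support (E : Finset σ) : (mkF E).support = E := by
  classical
  induction E using Finset.induction_on with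
  | empty => simp
  | @insert a s ha ih =>
    rw [mkF_insert ha, nsupport_add, ih, Finsupp.support_single_ne_zero _ one_ne_zero]
    rw [Finset.insert_eq]

end FinsuppHelp


/-- `μ` is the leading monomial of `p`. -/
def IsLeadingMonomial {σ F : Type*} [CommSemiring F] (O : AdmissibleOrder σ)
    (p : MvPolynomial σ F) (μ : σ →₀ ℕ) : Prop :=
  μ ∈ p.support ∧ ∀ ν ∈ p.support, ν ≠ μ → O.lt ν μ

/-- A monomial `μ` is reducible modulo an ideal `I` if it is the leading monomial of
some polynomial of `I`. -/
def Reducible {σ F : Type*} [CommSemiring F] (O : AdmissibleOrder σ)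
    (I : Ideal (MvPolynomial σ F)) (μ : σ →₀ ℕ) : Prop :=
  ∃ p ∈ I, IsLeadingMonomial O p μ

section PolyHelp

open MvPolynomial

variable {σ F : Type*} [Field F] (O : AdmissibleOrder σ)

lemma exists_LM {p : MvPolynomial σ F} (hp : p ≠ 0) : ∃ μ, IsLeadingMonomial O p μ := by
  obtain ⟨m, hm, hmax⟩ := O.exists_max p.support (by simpa using hp)
  exact ⟨m, hm, fun ν hν hne => (hmax ν hν).resolve_left hne⟩

lemma eq_zero_of_irred {I : Ideal (MvPolynomial σ F)} {f : MvPolynomial σ F}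
    (hf : f ∈ I) (h : ∀ w ∈ f.support, ¬ Reducible O I w) : f = 0 := by
  by_contra hne
  obtain ⟨μ, hμ⟩ := exists_LM O hne
  exact h μ hμ.1 ⟨f, hf, hμ⟩

lemma span_eval_zero {G : Set (MvPolynomial σ F)} {ξ : σ → F}
    (hξ : ∀ q ∈ G, MvPolynomial.eval ξ q = 0) {f : MvPolynomial σ F}
    (hf : f ∈ Ideal.span G) : MvPolynomial.eval ξ f = 0 := by
  have : Ideal.span G ≤ RingHom.ker (MvPolynomial.eval ξ) := by
    rw [Ideal.span_le]
    intro q hq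
    simpa [RingHom.mem_ker] using hξ q hq
  simpa [RingHom.mem_ker] using this hf

lemma one_not_mem_span {G : Set (MvPolynomial σ F)} {ξ : σ → F}
    (hξ : ∀ q ∈ G, MvPolynomial.eval ξ q = 0) : (1 : MvPolynomial σ F) ∉ Ideal.span G := by
  intro h
  have := span_eval_zero hξ h
  simp at this

/-- the substitution killing all variables outside `K`. -/
noncomputable def killHom (K : Set σ) : MvPolynomial σ F →ₐ[F] MvPolynomial σ F :=
  MvPolynomial.aeval (K.indicator fun y => MvPolynomial.X y)

lemma killHom_monomial_mem {K : Set σ} {m : σ →₀ ℕ} (h : (↑m.support : Set σ) ⊆ K)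
    (c : F) : killHom K (MvPolynomial.monomial m c) = MvPolynomial.monomial m c := by
  rw [killHom, MvPolynomial.aeval_monomial, MvPolynomial.monomial_eq]
  congr 1
  apply Finsupp.prod_congr
  intro y hy
  rw [Set.indicator_of_mem (h (by exact_mod_cast hy))]

lemma killHom_monomial_cases (K : Set σ) (m : σ →₀ ℕ) (c : F) :
    (killHom K (MvPolynomial.monomial m c) = MvPolynomial.monomial m c ∧
      (↑m.support : Set σ) ⊆ K) ∨
    killHom K (MvPolynomial.monomial m c) = 0 := by
  classical
  by_cases h : (↑m.support : Set σ) ⊆ K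
  · exact Or.inl ⟨killHom_monomial_mem h c, h⟩
  · right
    rw [Set.not_subset] at h
    obtain ⟨y, hy, hyK⟩ := h
    have hy' : y ∈ m.support := by exact_mod_cast hy
    rw [killHom, MvPolynomial.aeval_monomial]
    have : (m.prod fun i k => ((K.indicator fun y => MvPolynomial.X (R := F) y) i) ^ k) = 0 := by
      apply Finset.prod_eq_zero hy'
      simp only [Set.indicator_of_notMem hyK]
      exact zero_pow (by simpa using hy')
    rw [this, mul_zero]

lemma killHom_coeff_of_subset {K : Set σ} {m : σ →₀ ℕ} (h : (↑m.support : Set σ) ⊆ K)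
    (q : MvPolynomial σ F) : (killHom K q).coeff m = q.coeff m := by
  classical
  conv_lhs => rw [q.as_sum]
  rw [map_sum]
  conv_rhs => rw [q.as_sum]
  rw [MvPolynomial.coeff_sum, MvPolynomial.coeff_sum]
  apply Finset.sum_congr rfl
  intro v hv
  rcases eq_or_ne v m with rfl | hne
  · rw [killHom_monomial_mem h]
  · rcases killHom_monomial_cases K v (q.coeff v) with ⟨he, _⟩ | he
    · rw [he]
    · rw [he]
      rw [MvPolynomial.coeff_zero, MvPolynomial.coeff_monomial, if_neg hne]

lemma killHom_support {K : Set σ} {q : MvPolynomial σ F} {m : σ →₀ ℕ}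
    (h : m ∈ (killHom K q).support) :
    m ∈ q.support ∧ (↑m.support : Set σ) ⊆ K := by
  classical
  rw [MvPolynomial.mem_support_iff] at h
  have : (killHom K q).coeff m ≠ 0 := h
  have hsum : (killHom K q).coeff m =
      ∑ v ∈ q.support, (killHom K (MvPolynomial.monomial v (q.coeff v))).coeff m := by
    conv_lhs => rw [q.as_sum]
    rw [map_sum, MvPolynomial.coeff_sum]
  rw [hsum] at this
  obtain ⟨v, hv, hvne⟩ := Finset.exists_ne_zero_of_sum_ne_zero this
  rcases killHom_monomial_cases K v (q.coeff v) with ⟨he, hsub⟩ | he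
  · rw [he, MvPolynomial.coeff_monomial] at hvne
    rcases eq_or_ne v m with rfl | hne
    · exact ⟨hv, hsub⟩
    · rw [if_neg hne] at hvne
      exact absurd rfl hvne
  · rw [he] at hvne; simp at hvne

lemma killHom_fix {K : Set σ} {q : MvPolynomial σ F} (h : (↑q.vars : Set σ) ⊆ K) :
    killHom K q = q := by
  conv_lhs => rw [q.as_sum]
  conv_rhs => rw [q.as_sum]
  rw [map_sum]
  apply Finset.sum_congr rfl
  intro v hv
  apply killHom_monomial_mem
  intro y hy
  apply h
  have : y ∈ q.vars := by
    rw [MvPolynomial.mem_vars]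
    exact ⟨v, hv, by exact_mod_cast hy⟩
  exact_mod_cast this

lemma killHom_mem_span {K : Set σ} {G : Set (MvPolynomial σ F)}
    (hG : ∀ g ∈ G, (↑(MvPolynomial.vars g) : Set σ) ⊆ K) {q : MvPolynomial σ F}
    (hq : q ∈ Ideal.span G) : killHom K q ∈ Ideal.span G := by
  refine Submodule.span_induction ?_ ?_ ?_ ?_ hq
  · intro g hg
    rw [killHom_fix (hG g hg)]
    exact Ideal.subset_span hg
  · simp
  · intro a b _ _ ha hb
    rw [map_add]; exact Ideal.add_mem _ ha hb
  · intro a b _ hb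
    rw [smul_eq_mul, map_mul]
    exact Ideal.mul_mem_left _ _ hb

end PolyHelp

/-- The total degree of a monomial (exponent vector). -/
def monDeg {σ : Type*} (m : σ →₀ ℕ) : ℕ := m.sum fun _ e => e

/-- A `P`-support: a map `S` from sets of variables to subsets of `P`; `S` is applied
to a monomial `m` via its set of variables `m.support`. -/
structure IsSupport {σ F : Type*} [CommSemiring F] [DecidableEq σ]
    (O : AdmissibleOrder σ) (P : Set (MvPolynomial σ F))
    (S : Finset σ → Set (MvPolynomial σ F)) : Prop where
  subset_ambient : ∀ Y, S Y ⊆ P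
  prop1 : ∀ (x : σ) (m m' : σ →₀ ℕ), O.lt m' m → S m'.support ⊆ S m.support →
    S (m' + Finsupp.single x 1).support ⊆ S (m + Finsupp.single x 1).support
  prop2 : ∀ (m m' : σ →₀ ℕ), O.lt m' m →
    ((m'.support : Set σ) ⊆ ⋃ p ∈ S m.support, (p.vars : Set σ)) →
    S m'.support ⊆ S m.support
  prop3 : ∀ p ∈ P, ∀ μ : σ →₀ ℕ, IsLeadingMonomial O p μ → p ∈ S μ.support

section SuppLemmas

open MvPolynomial

variable {F : Type*} [Field F] {n : ℕ} {O : AdmissibleOrder (Fin n)}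
  {P : Set (MvPolynomial (Fin n) F)}
  {S : Finset (Fin n) → Set (MvPolynomial (Fin n) F)}

/-- the set of variables of the polynomials in `S Y`. -/
def sVars (S : Finset (Fin n) → Set (MvPolynomial (Fin n) F)) (Y : Finset (Fin n)) :
    Set (Fin n) := ⋃ p ∈ S Y, (p.vars : Set (Fin n))

lemma S_insert_mono (hS : IsSupport O P S) :
    ∀ (Y : Finset (Fin n)) (x : Fin n), S Y ⊆ S (insert x Y) := by
  classical
  intro Y
  induction Y using Finset.strongInduction with
  | _ Y ih =>
    intro x
    by_cases hx : x ∈ Y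
    · rw [Finset.insert_eq_self.2 hx]
    rcases Y.eq_empty_or_nonempty with rfl | ⟨z, hz⟩
    · have h0 : ((0 : Fin n →₀ ℕ)).support = (∅ : Finset (Fin n)) := by simp
      have hsx : (Finsupp.single x 1).support = {x} :=
        Finsupp.support_single_ne_zero _ one_ne_zero
      have := hS.prop2 (Finsupp.single x 1) 0
        (O.zero_lt _ ((fun h => one_ne_zero (Finsupp.single_eq_zero.1 h)))) (by simp)
      rw [h0, hsx] at this
      simpa using this
    · set Y₀ := Y.erase z with hY₀
      have hY₀ss : Y₀ ⊂ Y := Finset.erase_ssubset hz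
      have hxY₀ : x ∉ Y₀ := fun h => hx (Finset.mem_of_mem_erase h)
      have hzY₀ : z ∉ Y₀ := Finset.notMem_erase z Y
      set a := mkF Y₀ with ha
      set b := mkF Y₀ + Finsupp.single x 1 with hb
      have hab : O.lt a b := by
        have := O.add_lt a (O.zero_lt (Finsupp.single x 1)
          ((fun h => one_ne_zero (Finsupp.single_eq_zero.1 h))))
        simpa [hb] using this
      have hasupp : a.support = Y₀ := mkF_support Y₀
      have hbsupp : b.support = insert x Y₀ := by
        rw [hb, nsupport_add, mkF_support, Finsupp.support_single_ne_zero _ one_ne_zero]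
        ext t; simp only [Finset.mem_union, Finset.mem_singleton, Finset.mem_insert]; tauto
      have hIH : S a.support ⊆ S b.support := by
        rw [hasupp, hbsupp]; exact ih Y₀ hY₀ss x
      have := hS.prop1 z b a hab hIH
      have hlsupp : (a + Finsupp.single z 1).support = Y := by
        rw [nsupport_add, hasupp, Finsupp.support_single_ne_zero _ one_ne_zero]
        rw [Finset.union_comm, ← Finset.insert_eq, hY₀, Finset.insert_erase hz]
      have hrsupp : (b + Finsupp.single z 1).support = insert x Y := by
        rw [nsupport_add, hbsupp, Finsupp.support_single_ne_zero _ one_ne_zero]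
        rw [Finset.union_comm, ← Finset.insert_eq]
        ext t
        simp only [Finset.mem_insert, hY₀, Finset.mem_erase]
        constructor
        · rintro (rfl | rfl | ⟨_, ht⟩) <;> tauto
        · rintro (rfl | ht)
          · tauto
          · rcases eq_or_ne t z with rfl | htz <;> tauto
      rw [hlsupp, hrsupp] at this
      exact this

lemma S_mono (hS : IsSupport O P S) {Y Y' : Finset (Fin n)} (h : Y ⊆ Y') :
    S Y ⊆ S Y' := by
  classical
  have key : ∀ (E : Finset (Fin n)), S Y ⊆ S (Y ∪ E) := by
    intro E
    induction E using Finset.induction_on with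
    | empty => simp
    | @insert a E ha ih =>
      have : Y ∪ insert a E = insert a (Y ∪ E) := by
        ext t; simp [Finset.mem_insert, or_assoc, or_comm, or_left_comm]
      rw [this]
      exact ih.trans (S_insert_mono hS (Y ∪ E) a)
  have := key Y'
  rwa [Finset.union_eq_right.2 h] at this

lemma S_chain (hS : IsSupport O P S) {a b : Fin n →₀ ℕ} (hab : O.lt a b)
    (hsub : S a.support ⊆ S b.support) (E : Finset (Fin n)) :
    S ((a + mkF E).support) ⊆ S ((b + mkF E).support) := by
  classical
  induction E using Finset.induction_on with
  | empty => simpa using hsub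
  | @insert y E hy ih =>
    rw [mkF_insert hy]
    have h1 : a + (Finsupp.single y 1 + mkF E) = (a + mkF E) + Finsupp.single y 1 := by
      abel
    have h2 : b + (Finsupp.single y 1 + mkF E) = (b + mkF E) + Finsupp.single y 1 := by
      abel
    rw [h1, h2]
    exact hS.prop1 y (b + mkF E) (a + mkF E) (O.add_lt_right hab _) ih

/-- Key lemma: a monomial `μ ≺ v` whose variables lie in `vars (S v.support) ∪ vars v`
has `S μ.support ⊆ S v.support`. -/
lemma S_tail (hS : IsSupport O P S) {μ v : Fin n →₀ ℕ} (hlt : O.lt μ v)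
    (hvars : (↑μ.support : Set (Fin n)) ⊆ sVars S v.support ∪ ↑v.support) :
    S μ.support ⊆ S v.support := by
  classical
  set a := Finsupp.filter (fun y => y ∈ sVars S v.support) μ with ha
  set E := μ.support.filter (fun y => y ∉ sVars S v.support) with hE
  have hasupp : a.support = μ.support.filter (fun y => y ∈ sVars S v.support) :=
    Finsupp.support_filter _ _
  have haμ : a ≤ μ := by
    intro y
    rw [ha, Finsupp.filter_apply]
    split <;> simp
  have hav : O.lt a v := by
    rcases O.le_of_le a μ haμ with he | h
    · rw [he]; exact hlt
    · exact O.trans h hlt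
  have haS : S a.support ⊆ S v.support := by
    apply hS.prop2 v a hav
    rw [hasupp]
    intro y hy
    simp only [Finset.coe_filter, Set.mem_setOf_eq] at hy
    exact hy.2
  have hEv : E ⊆ v.support := by
    intro y hy
    rw [hE, Finset.mem_filter] at hy
    rcases hvars (by exact_mod_cast hy.1) with h | h
    · exact absurd h hy.2
    · exact_mod_cast h
  have hl : (a + mkF E).support = μ.support := by
    rw [nsupport_add, hasupp, mkF_support, hE]
    exact Finset.filter_union_filter_not_eq _ _
  have hrr : (v + mkF E).support = v.support := by
    rw [nsupport_add, mkF_support]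
    exact Finset.union_eq_left.2 hEv
  have := S_chain hS hav haS E
  rwa [hl, hrr] at this

end SuppLemmas

section NormalForm

open MvPolynomial

variable {F : Type*} [Field F] {n : ℕ} {O : AdmissibleOrder (Fin n)}
  {P : Set (MvPolynomial (Fin n) F)}
  {S : Finset (Fin n) → Set (MvPolynomial (Fin n) F)}

/-- `v` is reducible modulo its own support ideal. -/
def RedM (O : AdmissibleOrder (Fin n)) (S : Finset (Fin n) → Set (MvPolynomial (Fin n) F))
    (v : Fin n →₀ ℕ) : Prop :=
  Reducible O (Ideal.span (S v.support)) v

lemma fsmul_mem {I : Ideal (MvPolynomial (Fin n) F)} (c : F) {f : MvPolynomial (Fin n) F}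
    (hf : f ∈ I) : c • f ∈ I := by
  rw [MvPolynomial.smul_eq_C_mul]; exact I.mul_mem_left _ hf

lemma exists_witness {v : Fin n →₀ ℕ} (h : RedM O S v) :
    ∃ g : MvPolynomial (Fin n) F, g ∈ Ideal.span (S v.support) ∧ g.coeff v = 1 ∧
      (∀ μ ∈ g.support, μ = v ∨ O.lt μ v) ∧
      (∀ μ ∈ g.support, (↑μ.support : Set (Fin n)) ⊆ sVars S v.support ∪ ↑v.support) := by
  obtain ⟨g₀, hg₀, hLM⟩ := h
  set K : Set (Fin n) := sVars S v.support ∪ ↑v.support with hK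
  have hvK : (↑v.support : Set (Fin n)) ⊆ K := Set.subset_union_right
  have hGK : ∀ g ∈ S v.support, (↑(MvPolynomial.vars g) : Set (Fin n)) ⊆ K := by
    intro g hg
    refine Set.Subset.trans ?_ Set.subset_union_left
    intro y hy
    exact Set.mem_biUnion hg hy
  set g₁ := killHom K g₀ with hg₁
  have hg₁mem : g₁ ∈ Ideal.span (S v.support) := killHom_mem_span hGK hg₀
  have hg₁v : g₁.coeff v = g₀.coeff v := killHom_coeff_of_subset hvK g₀
  have hg₀v : g₀.coeff v ≠ 0 := by
    rw [← MvPolynomial.mem_support_iff]; exact hLM.1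
  refine ⟨(g₀.coeff v)⁻¹ • g₁, fsmul_mem _ hg₁mem, ?_, ?_, ?_⟩
  · rw [MvPolynomial.coeff_smul, hg₁v, smul_eq_mul, inv_mul_cancel₀ hg₀v]
  · intro μ hμ
    have hμ₁ : μ ∈ g₁.support := MvPolynomial.support_smul hμ
    have hμ₀ : μ ∈ g₀.support := (killHom_support hμ₁).1
    rcases eq_or_ne μ v with rfl | hne
    · exact Or.inl rfl
    · exact Or.inr (hLM.2 μ hμ₀ hne)
  · intro μ hμ
    have hμ₁ : μ ∈ g₁.support := MvPolynomial.support_smul hμ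
    exact (killHom_support hμ₁).2

/-- the defining property of the normal form of the monomial `v`. -/
def NFat (O : AdmissibleOrder (Fin n)) (S : Finset (Fin n) → Set (MvPolynomial (Fin n) F))
    (v : Fin n →₀ ℕ) (r : MvPolynomial (Fin n) F) : Prop :=
  (MvPolynomial.monomial v 1 - r) ∈ Ideal.span (S v.support) ∧
  ∀ w ∈ r.support, (w = v ∨ O.lt w v) ∧ S w.support ⊆ S v.support ∧ ¬ RedM O S w

lemma NFat_exists (hS : IsSupport O P S) (v : Fin n →₀ ℕ) :
    ∃ r : MvPolynomial (Fin n) F, NFat O S v r := by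
  induction v using O.wf.induction with
  | _ v ih =>
  by_cases h : RedM O S v
  · obtain ⟨g, hgmem, hgv, hgord, hgvars⟩ := exists_witness h
    set tail := g - MvPolynomial.monomial v 1 with htaildef
    have htails : ∀ μ ∈ tail.support, O.lt μ v ∧ S μ.support ⊆ S v.support := by
      intro μ hμ
      have hco : tail.coeff μ ≠ 0 := MvPolynomial.mem_support_iff.1 hμ
      have hne : μ ≠ v := by
        rintro rfl
        rw [htaildef, MvPolynomial.coeff_sub, hgv, MvPolynomial.coeff_monomial,
          if_pos rfl] at hco
        simp at hco
      have hμg : μ ∈ g.support := by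
        rw [MvPolynomial.mem_support_iff]
        rw [htaildef, MvPolynomial.coeff_sub, MvPolynomial.coeff_monomial,
          if_neg (Ne.symm hne), sub_zero] at hco
        exact hco
      have hlt : O.lt μ v := (hgord μ hμg).resolve_left hne
      exact ⟨hlt, S_tail hS hlt (hgvars μ hμg)⟩
    -- choose recursively normal forms for the tail monomials
    have hch : ∀ μ ∈ tail.support, ∃ r, NFat O S μ r := fun μ hμ => ih μ (htails μ hμ).1
    classical
    set r : MvPolynomial (Fin n) F :=
      -∑ μ ∈ tail.support.attach,
        tail.coeff μ.1 • Classical.choose (hch μ.1 μ.2) with hrdef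
    have hrspec : ∀ μ : tail.support, NFat O S μ.1 (Classical.choose (hch μ.1 μ.2)) :=
      fun μ => Classical.choose_spec (hch μ.1 μ.2)
    have htail_sum : ∑ μ ∈ tail.support.attach,
        tail.coeff μ.1 • (MvPolynomial.monomial μ.1 (1 : F)) = tail := by
      calc ∑ μ ∈ tail.support.attach, tail.coeff μ.1 • (MvPolynomial.monomial μ.1 (1 : F))
          = ∑ μ ∈ tail.support.attach, MvPolynomial.monomial μ.1 (tail.coeff μ.1) := by
            refine Finset.sum_congr rfl fun μ _ => ?_
            rw [MvPolynomial.smul_monomial, smul_eq_mul, mul_one]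
        _ = ∑ μ ∈ tail.support, MvPolynomial.monomial μ (tail.coeff μ) :=
            Finset.sum_attach tail.support (fun μ => MvPolynomial.monomial μ (tail.coeff μ))
        _ = tail := (MvPolynomial.as_sum tail).symm
    refine ⟨r, ?_, ?_⟩
    · have hkey : MvPolynomial.monomial v 1 - r =
          g + ∑ μ ∈ tail.support.attach,
            tail.coeff μ.1 • (Classical.choose (hch μ.1 μ.2) -
              MvPolynomial.monomial μ.1 (1 : F)) := by
        have hgt : MvPolynomial.monomial v (1 : F) = g - tail := by
          rw [htaildef]; abel
        rw [hgt, hrdef]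
        simp only [smul_sub]
        rw [Finset.sum_sub_distrib, htail_sum]
        abel
      rw [hkey]
      refine Ideal.add_mem _ hgmem (Ideal.sum_mem _ ?_)
      intro μ _
      apply fsmul_mem
      have h1 : MvPolynomial.monomial μ.1 (1 : F) - Classical.choose (hch μ.1 μ.2) ∈
          Ideal.span (S μ.1.support) := (hrspec μ).1
      have h2 : Ideal.span (S μ.1.support) ≤ Ideal.span (S v.support) :=
        Ideal.span_mono (htails μ.1 μ.2).2
      have := h2 h1
      have hneg := neg_mem this
      simpa using hneg
    · intro w hw
      have hco : r.coeff w ≠ 0 := MvPolynomial.mem_support_iff.1 hw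
      rw [hrdef, MvPolynomial.coeff_neg, neg_ne_zero, MvPolynomial.coeff_sum] at hco
      obtain ⟨μ, _, hμne⟩ := Finset.exists_ne_zero_of_sum_ne_zero hco
      rw [MvPolynomial.coeff_smul, smul_eq_mul] at hμne
      have hwμ : w ∈ (Classical.choose (hch μ.1 μ.2)).support := by
        rw [MvPolynomial.mem_support_iff]
        exact fun hz => hμne (by rw [hz, mul_zero])
      obtain ⟨hord, hsub, hirr⟩ := (hrspec μ).2 w hwμ
      obtain ⟨hltμ, hsubμ⟩ := htails μ.1 μ.2
      refine ⟨?_, hsub.trans hsubμ, hirr⟩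
      rcases hord with rfl | hlt
      · exact Or.inr hltμ
      · exact Or.inr (O.trans hlt hltμ)
  · refine ⟨MvPolynomial.monomial v 1, by simp, ?_⟩
    intro w hw
    classical
    rw [MvPolynomial.support_monomial, if_neg (one_ne_zero)] at hw
    rw [Finset.mem_singleton] at hw
    subst hw
    exact ⟨Or.inl rfl, le_refl _, h⟩

/-- the chosen normal form of a monomial. -/
noncomputable def Rnf (hS : IsSupport O P S) (v : Fin n →₀ ℕ) : MvPolynomial (Fin n) F :=
  Classical.choose (NFat_exists hS v)

lemma Rnf_spec (hS : IsSupport O P S) (v : Fin n →₀ ℕ) : NFat O S v (Rnf hS v) :=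
  Classical.choose_spec (NFat_exists hS v)

end NormalForm

section RlinG

open MvPolynomial

variable {F : Type*} [Field F] {n : ℕ}

/-- linear extension of a map on monomials. -/
noncomputable def RlinG (φ : (Fin n →₀ ℕ) → MvPolynomial (Fin n) F)
    (p : MvPolynomial (Fin n) F) : MvPolynomial (Fin n) F :=
  ∑ m ∈ p.support, p.coeff m • φ m

lemma RlinG_sum_subset {φ : (Fin n →₀ ℕ) → MvPolynomial (Fin n) F}
    {p : MvPolynomial (Fin n) F} {E : Finset (Fin n →₀ ℕ)} (h : p.support ⊆ E) :
    RlinG φ p = ∑ m ∈ E, p.coeff m • φ m := by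
  rw [RlinG]
  apply Finset.sum_subset h
  intro m _ hm
  rw [MvPolynomial.notMem_support_iff.1 hm, zero_smul]

@[simp] lemma RlinG_zero (φ : (Fin n →₀ ℕ) → MvPolynomial (Fin n) F) :
    RlinG φ 0 = 0 := by simp [RlinG]

lemma RlinG_add (φ : (Fin n →₀ ℕ) → MvPolynomial (Fin n) F)
    (p q : MvPolynomial (Fin n) F) : RlinG φ (p + q) = RlinG φ p + RlinG φ q := by
  classical
  have h1 : (p + q).support ⊆ p.support ∪ q.support := MvPolynomial.support_add
  rw [RlinG_sum_subset h1, RlinG_sum_subset (Finset.subset_union_left (s₂ := q.support)),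
    RlinG_sum_subset (Finset.subset_union_right (s₁ := p.support))]
  rw [← Finset.sum_add_distrib]
  apply Finset.sum_congr rfl
  intro m _
  rw [MvPolynomial.coeff_add, add_smul]

lemma RlinG_smul (φ : (Fin n →₀ ℕ) → MvPolynomial (Fin n) F) (c : F)
    (p : MvPolynomial (Fin n) F) : RlinG φ (c • p) = c • RlinG φ p := by
  have h1 : (c • p).support ⊆ p.support := MvPolynomial.support_smul
  rw [RlinG_sum_subset h1, RlinG, Finset.smul_sum]
  apply Finset.sum_congr rfl
  intro m _
  rw [MvPolynomial.coeff_smul, smul_eq_mul, smul_smul]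

lemma RlinG_finsum {ι : Type*} (φ : (Fin n →₀ ℕ) → MvPolynomial (Fin n) F)
    (s : Finset ι) (f : ι → MvPolynomial (Fin n) F) :
    RlinG φ (∑ i ∈ s, f i) = ∑ i ∈ s, RlinG φ (f i) := by
  classical
  induction s using Finset.induction_on with
  | empty => simp
  | @insert a s ha ih =>
    rw [Finset.sum_insert ha, Finset.sum_insert ha, RlinG_add, ih]

lemma RlinG_monomial (φ : (Fin n →₀ ℕ) → MvPolynomial (Fin n) F) (v : Fin n →₀ ℕ) (c : F) :
    RlinG φ (MvPolynomial.monomial v c) = c • φ v := by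
  classical
  rcases eq_or_ne c 0 with rfl | hc
  · simp
  · rw [RlinG]
    rw [MvPolynomial.support_monomial, if_neg hc, Finset.sum_singleton,
      MvPolynomial.coeff_monomial, if_pos rfl]

lemma RlinG_support {φ : (Fin n →₀ ℕ) → MvPolynomial (Fin n) F}
    {p : MvPolynomial (Fin n) F} {w : Fin n →₀ ℕ} (h : w ∈ (RlinG φ p).support) :
    ∃ m ∈ p.support, w ∈ (φ m).support := by
  have hco : (RlinG φ p).coeff w ≠ 0 := MvPolynomial.mem_support_iff.1 h
  rw [RlinG, MvPolynomial.coeff_sum] at hco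
  obtain ⟨m, hm, hmne⟩ := Finset.exists_ne_zero_of_sum_ne_zero hco
  refine ⟨m, hm, ?_⟩
  rw [MvPolynomial.coeff_smul, smul_eq_mul] at hmne
  rw [MvPolynomial.mem_support_iff]
  exact fun hz => hmne (by rw [hz, mul_zero])

end RlinG

section MainLemmas

open MvPolynomial

variable {F : Type*} [Field F] {n : ℕ} {O : AdmissibleOrder (Fin n)}
  {P : Set (MvPolynomial (Fin n) F)}
  {S : Finset (Fin n) → Set (MvPolynomial (Fin n) F)} {D : ℕ}

lemma transfer
    (hred : ∀ m : Fin n →₀ ℕ, monDeg m ≤ D → ∀ m' : Fin n →₀ ℕ,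
      S m'.support ⊆ S m.support →
      (Reducible O (Ideal.span (S m'.support)) m' ↔
        Reducible O (Ideal.span (S m.support)) m'))
    {M w : Fin n →₀ ℕ} (hM : monDeg M ≤ D)
    (h1 : ¬ RedM O S w) (h2 : S w.support ⊆ S M.support) :
    ¬ Reducible O (Ideal.span (S M.support)) w :=
  fun hr => h1 ((hred M hM w h2).mpr hr)

lemma monomial_smul_sum (p : MvPolynomial (Fin n) F) :
    ∑ t ∈ p.support, p.coeff t • MvPolynomial.monomial t (1 : F) = p := by
  calc ∑ t ∈ p.support, p.coeff t • MvPolynomial.monomial t (1 : F)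
      = ∑ t ∈ p.support, MvPolynomial.monomial t (p.coeff t) := by
        refine Finset.sum_congr rfl fun t _ => ?_
        rw [MvPolynomial.smul_monomial, smul_eq_mul, mul_one]
    _ = p := (MvPolynomial.as_sum p).symm

lemma X_mul_mono (x : Fin n) (m : Fin n →₀ ℕ) :
    (MvPolynomial.X x : MvPolynomial (Fin n) F) * MvPolynomial.monomial m 1 =
      MvPolynomial.monomial (Finsupp.single x 1 + m) 1 := by
  rw [MvPolynomial.X, MvPolynomial.monomial_mul, one_mul]

lemma dagger (hS : IsSupport O P S)
    (hred : ∀ m : Fin n →₀ ℕ, monDeg m ≤ D → ∀ m' : Fin n →₀ ℕ,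
      S m'.support ⊆ S m.support →
      (Reducible O (Ideal.span (S m'.support)) m' ↔
        Reducible O (Ideal.span (S m.support)) m'))
    (x : Fin n) (t : Fin n →₀ ℕ)
    (hdeg : monDeg (Finsupp.single x 1 + t) ≤ D) :
    Rnf hS (Finsupp.single x 1 + t) =
      RlinG (fun m => Rnf hS (Finsupp.single x 1 + m)) (Rnf hS t) := by
  classical
  set xt := Finsupp.single x 1 + t with hxt
  set Rt := Rnf hS t with hRt
  set I := Ideal.span (S xt.support) with hI
  have hSt : S t.support ⊆ S xt.support := by
    apply S_mono hS
    rw [hxt, nsupport_add]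
    exact Finset.subset_union_right
  have hC1 : ∀ t' ∈ Rt.support, S ((Finsupp.single x 1 + t').support) ⊆ S xt.support := by
    intro t' ht'
    obtain ⟨hord, hsub, _⟩ := (Rnf_spec hS t).2 t' ht'
    rcases hord with rfl | hlt
    · exact le_refl _
    · have := hS.prop1 x t t' hlt hsub
      rwa [add_comm t' _, add_comm t _] at this
  set Φ : (Fin n →₀ ℕ) → MvPolynomial (Fin n) F :=
    fun m => Rnf hS (Finsupp.single x 1 + m) with hΦ
  have hF2 : ∑ t' ∈ Rt.support, Rt.coeff t' •
      MvPolynomial.monomial (Finsupp.single x 1 + t') (1 : F) =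
      MvPolynomial.X x * Rt := by
    conv_rhs => rw [← monomial_smul_sum Rt]
    rw [Finset.mul_sum]
    refine Finset.sum_congr rfl fun t' _ => ?_
    rw [mul_smul_comm, X_mul_mono]
  have hΔmem : Rnf hS xt - RlinG Φ Rt ∈ I := by
    have hkey : Rnf hS xt - RlinG Φ Rt =
        -(MvPolynomial.monomial xt 1 - Rnf hS xt)
        + ∑ t' ∈ Rt.support, Rt.coeff t' •
            (MvPolynomial.monomial (Finsupp.single x 1 + t') 1 - Φ t')
        + MvPolynomial.X x * (MvPolynomial.monomial t 1 - Rt) := by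
      simp only [smul_sub]
      rw [Finset.sum_sub_distrib, hF2]
      have hB : RlinG Φ Rt = ∑ t' ∈ Rt.support, Rt.coeff t' • Φ t' := rfl
      rw [hB, mul_sub]
      have hXt : (MvPolynomial.X x : MvPolynomial (Fin n) F) *
          MvPolynomial.monomial t 1 = MvPolynomial.monomial xt 1 := X_mul_mono x t
      rw [hXt]
      abel
    rw [hkey]
    refine Ideal.add_mem _ (Ideal.add_mem _ ?_ ?_) ?_
    · exact neg_mem (Rnf_spec hS xt).1
    · refine Ideal.sum_mem _ fun t' ht' => ?_
      apply fsmul_mem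
      have h1 : MvPolynomial.monomial (Finsupp.single x 1 + t') 1 -
          Rnf hS (Finsupp.single x 1 + t') ∈
          Ideal.span (S (Finsupp.single x 1 + t').support) :=
        (Rnf_spec hS (Finsupp.single x 1 + t')).1
      exact Ideal.span_mono (hC1 t' ht') h1
    · apply Ideal.mul_mem_left
      exact Ideal.span_mono hSt (Rnf_spec hS t).1
  have hΔirr : ∀ w ∈ (Rnf hS xt - RlinG Φ Rt).support, ¬ Reducible O I w := by
    intro w hw
    have hco : (Rnf hS xt).coeff w - (RlinG Φ Rt).coeff w ≠ 0 := by
      have := MvPolynomial.mem_support_iff.1 hw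
      rwa [MvPolynomial.coeff_sub] at this
    by_cases hw1 : w ∈ (Rnf hS xt).support
    · obtain ⟨_, hsub, hirr⟩ := (Rnf_spec hS xt).2 w hw1
      exact transfer hred hdeg hirr hsub
    · have hw2 : w ∈ (RlinG Φ Rt).support := by
        rw [MvPolynomial.mem_support_iff]
        intro hz
        rw [MvPolynomial.notMem_support_iff.1 hw1, hz, sub_zero] at hco
        exact hco rfl
      obtain ⟨t', ht', hwt'⟩ := RlinG_support hw2
      obtain ⟨_, hsub, hirr⟩ := (Rnf_spec hS (Finsupp.single x 1 + t')).2 w hwt'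
      exact transfer hred hdeg hirr (hsub.trans (hC1 t' ht'))
  have := eq_zero_of_irred O hΔmem hΔirr
  have := sub_eq_zero.1 this
  exact this

end MainLemmas

section Assemble

open MvPolynomial

variable {F : Type*} [Field F] {n : ℕ} {O : AdmissibleOrder (Fin n)}
  {P : Set (MvPolynomial (Fin n) F)}
  {S : Finset (Fin n) → Set (MvPolynomial (Fin n) F)} {D : ℕ}

lemma Rlin_axiom (hS : IsSupport O P S)
    (hred : ∀ m : Fin n →₀ ℕ, monDeg m ≤ D → ∀ m' : Fin n →₀ ℕ,
      S m'.support ⊆ S m.support →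
      (Reducible O (Ideal.span (S m'.support)) m' ↔
        Reducible O (Ideal.span (S m.support)) m'))
    (hPdeg : ∀ p ∈ P, p.totalDegree ≤ D) {p : MvPolynomial (Fin n) F} (hp : p ∈ P) :
    RlinG (Rnf hS) p = 0 := by
  rcases eq_or_ne p 0 with rfl | hne
  · simp
  obtain ⟨mx, hLM⟩ := exists_LM O hne
  have hdeg : monDeg mx ≤ D := le_trans (MvPolynomial.le_totalDegree hLM.1) (hPdeg p hp)
  have hp3 : p ∈ S mx.support := hS.prop3 p hp mx hLM
  have htS : ∀ t ∈ p.support, S t.support ⊆ S mx.support := by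
    intro t ht
    rcases eq_or_ne t mx with rfl | hne'
    · exact le_refl _
    · apply hS.prop2 mx t (hLM.2 t ht hne')
      intro y hy
      have hy' : y ∈ t.support := by exact_mod_cast hy
      have hyp : y ∈ p.vars := (MvPolynomial.mem_vars y).2 ⟨t, ht, hy'⟩
      exact Set.mem_biUnion hp3 (by exact_mod_cast hyp)
  have hmem : RlinG (Rnf hS) p ∈ Ideal.span (S mx.support) := by
    have hkey : RlinG (Rnf hS) p =
        p - ∑ t ∈ p.support, p.coeff t • (MvPolynomial.monomial t 1 - Rnf hS t) := by
      simp only [smul_sub]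
      rw [Finset.sum_sub_distrib, monomial_smul_sum]
      have hA : RlinG (Rnf hS) p = ∑ t ∈ p.support, p.coeff t • Rnf hS t := rfl
      rw [hA]; abel
    rw [hkey]
    refine Ideal.sub_mem _ (Ideal.subset_span hp3) (Ideal.sum_mem _ fun t ht => ?_)
    exact fsmul_mem _ (Ideal.span_mono (htS t ht) (Rnf_spec hS t).1)
  have hirr : ∀ w ∈ (RlinG (Rnf hS) p).support,
      ¬ Reducible O (Ideal.span (S mx.support)) w := by
    intro w hw
    obtain ⟨t, ht, hwt⟩ := RlinG_support hw
    obtain ⟨_, hsub, hirrw⟩ := (Rnf_spec hS t).2 w hwt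
    exact transfer hred hdeg hirrw (hsub.trans (htS t ht))
  exact eq_zero_of_irred O hmem hirr

lemma Rlin_prod (hS : IsSupport O P S)
    (hred : ∀ m : Fin n →₀ ℕ, monDeg m ≤ D → ∀ m' : Fin n →₀ ℕ,
      S m'.support ⊆ S m.support →
      (Reducible O (Ideal.span (S m'.support)) m' ↔
        Reducible O (Ideal.span (S m.support)) m'))
    (x : Fin n) (q : MvPolynomial (Fin n) F)
    (hq : RlinG (Rnf hS) q = 0)
    (hdeg : (MvPolynomial.X x * q).totalDegree ≤ D) :
    RlinG (Rnf hS) (MvPolynomial.X x * q) = 0 := by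
  classical
  have hsup := MvPolynomial.support_X_mul x q
  have hstep1 : RlinG (Rnf hS) (MvPolynomial.X x * q) =
      ∑ t ∈ q.support, q.coeff t • Rnf hS (Finsupp.single x 1 + t) := by
    rw [RlinG, hsup, Finset.sum_map]
    refine Finset.sum_congr rfl fun t ht => ?_
    have he : (addLeftEmbedding (Finsupp.single x 1)) t = Finsupp.single x 1 + t := rfl
    rw [he, MvPolynomial.coeff_X_mul]
  have hdag : ∀ t ∈ q.support,
      Rnf hS (Finsupp.single x 1 + t) =
        RlinG (fun m => Rnf hS (Finsupp.single x 1 + m)) (Rnf hS t) := by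
    intro t ht
    apply dagger hS hred
    have hmem : Finsupp.single x 1 + t ∈ (MvPolynomial.X x * q).support := by
      rw [hsup, Finset.mem_map]
      exact ⟨t, ht, rfl⟩
    exact le_trans (MvPolynomial.le_totalDegree hmem) hdeg
  rw [hstep1, Finset.sum_congr rfl (fun t ht => by rw [hdag t ht])]
  set Φ : (Fin n →₀ ℕ) → MvPolynomial (Fin n) F :=
    fun m => Rnf hS (Finsupp.single x 1 + m) with hΦ
  calc ∑ t ∈ q.support, q.coeff t • RlinG Φ (Rnf hS t)
      = ∑ t ∈ q.support, RlinG Φ (q.coeff t • Rnf hS t) := by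
        exact Finset.sum_congr rfl fun t _ => (RlinG_smul Φ _ _).symm
    _ = RlinG Φ (∑ t ∈ q.support, q.coeff t • Rnf hS t) := (RlinG_finsum Φ _ _).symm
    _ = RlinG Φ (RlinG (Rnf hS) q) := rfl
    _ = 0 := by rw [hq]; simp

end Assemble

/-- A polynomial calculus derivation from `P`. -/
def IsPCDerivation {σ F : Type*} [CommSemiring F]
    (P : Set (MvPolynomial σ F)) (π : List (MvPolynomial σ F)) : Prop :=
  ∀ i (hi : i < π.length), π[i] ∈ P ∨
    (∃ j j', ∃ (hj : j < i) (hj' : j' < i), ∃ a b : F,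
      π[i] = a • π[j]'(hj.trans hi) + b • π[j']'(hj'.trans hi)) ∨
    (∃ j, ∃ (hj : j < i), ∃ x : σ,
      π[i] = MvPolynomial.X x * π[j]'(hj.trans hi))

/-- A polynomial calculus refutation of `P`. -/
def IsPCRefutation {σ F : Type*} [CommSemiring F]
    (P : Set (MvPolynomial σ F)) (π : List (MvPolynomial σ F)) : Prop :=
  IsPCDerivation P π ∧ π.getLast? = some 1

/-- if a `P`-support `S` satisfies the satisfiability condition and the
reducibility condition for all monomials of degree at most `D`, then every polynomial
calculus refutation of `P` has degree strictly greater than `D`. -/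
theorem stmt_8 {F : Type*} [Field F] {n : ℕ} (O : AdmissibleOrder (Fin n))
    (D : ℕ) (hD : 0 < D)
    (P : Set (MvPolynomial (Fin n) F)) (hPdeg : ∀ p ∈ P, p.totalDegree ≤ D)
    (S : Finset (Fin n) → Set (MvPolynomial (Fin n) F)) (hS : IsSupport O P S)
    (hsat : ∀ m : Fin n →₀ ℕ, monDeg m ≤ D →
      ∃ ξ : Fin n → F, ∀ q ∈ S m.support, MvPolynomial.eval ξ q = 0)
    (hred : ∀ m : Fin n →₀ ℕ, monDeg m ≤ D → ∀ m' : Fin n →₀ ℕ,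
      S m'.support ⊆ S m.support →
      (Reducible O (Ideal.span (S m'.support)) m' ↔
        Reducible O (Ideal.span (S m.support)) m')) :
    ∀ π : List (MvPolynomial (Fin n) F), IsPCRefutation P π →
      ∃ p ∈ π, D < p.totalDegree := by
  intro π hπ
  by_contra hcon
  push_neg at hcon
  obtain ⟨hder, hlast⟩ := hπ
  have hinv : ∀ i (hi : i < π.length), RlinG (Rnf hS) (π[i]'hi) = 0 := by
    intro i
    induction i using Nat.strong_induction_on with
    | _ i ih =>
      intro hi
      rcases hder i hi with hax | ⟨j, j', hj, hj', a, b, heq⟩ | ⟨j, hj, x, heq⟩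
      · exact Rlin_axiom hS hred hPdeg hax
      · rw [heq, RlinG_add, RlinG_smul, RlinG_smul,
          ih j hj (hj.trans hi), ih j' hj' (hj'.trans hi)]
        simp
      · rw [heq]
        apply Rlin_prod hS hred x _ (ih j hj (hj.trans hi))
        rw [← heq]
        exact hcon _ (List.getElem_mem hi)
  have hne : π ≠ [] := by
    intro h
    rw [h] at hlast
    simp at hlast
  have hlen : 0 < π.length := List.length_pos_iff.2 hne
  have hlast1 : π.getLast hne = 1 := by
    rwa [List.getLast?_eq_getLast hne, Option.some_inj] at hlast
  have hlast2 : π[π.length - 1]'(by omega) = 1 := by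
    rw [← List.getLast_eq_getElem hne]
    exact hlast1
  have h1 : RlinG (Rnf hS) (1 : MvPolynomial (Fin n) F) = 0 := by
    rw [← hlast2]
    exact hinv _ _
  have h2 : RlinG (Rnf hS) (1 : MvPolynomial (Fin n) F) = Rnf hS 0 := by
    have hone : (1 : MvPolynomial (Fin n) F) = MvPolynomial.monomial 0 1 := by
      rw [MvPolynomial.monomial_zero', MvPolynomial.C_1]
    rw [hone, RlinG_monomial, one_smul]
  have hR0 : Rnf hS (0 : Fin n →₀ ℕ) = 0 := by rw [← h2, h1]
  have h3 : (1 : MvPolynomial (Fin n) F) ∈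
      Ideal.span (S (0 : Fin n →₀ ℕ).support) := by
    have := (Rnf_spec hS (0 : Fin n →₀ ℕ)).1
    rw [hR0, sub_zero] at this
    rwa [MvPolynomial.monomial_zero', MvPolynomial.C_1] at this
  obtain ⟨ξ, hξ⟩ := hsat 0 (by simp [monDeg])
  exact one_not_mem_span hξ h3
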